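/- For nonnegative integers x, y with x ≥ 1 and any integer s with 0 ≤ s ≤ x+y, the ratio [Binom(x+1,3/4)*Binom(y-1,1/4)](s) / [Binom(x,3/4)*Binom(y,1/4)](s) lies between 1/3 and 3 (where y ≥ 1). -/
import Mathlib

open Finset

noncomputable def binomPmf (m : ℕ) (p : ℝ) (k : ℕ) : ℝ :=
  (m.choose k : ℝ) * p ^ k * (1 - p) ^ (m - k)

noncomputable def convPmf (f g : ℕ → ℝ) (s : ℕ) : ℝ :=
  ∑ i ∈ Finset.range (s + 1), f i * g (s - i)

lemma binom_split (m : ℕ) (p : ℝ) (k : ℕ) :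
    binomPmf (m+1) p k =
      (1-p) * binomPmf m p k + p * (if k = 0 then 0 else binomPmf m p (k-1)) := by
  cases k with
  | zero => simp [binomPmf, pow_succ]; ring
  | succ n =>
    simp only [Nat.succ_ne_zero, if_false, Nat.succ_sub_one, binomPmf]
    rw [Nat.choose_succ_succ]
    push_cast
    rcases le_or_gt (n+1) m with h | h
    · have e : m - n = m - (n+1) + 1 := by omega
      rw [e, pow_succ]
      ring
    · have h1 : m.choose (n+1) = 0 := Nat.choose_eq_zero_of_lt h
      rw [h1]
      push_cast
      ring

lemma conv_split (m : ℕ) (p : ℝ) (g : ℕ → ℝ) (s : ℕ) :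
    convPmf (binomPmf (m+1) p) g s =
      (1-p) * convPmf (binomPmf m p) g s +
      p * (if s = 0 then 0 else convPmf (binomPmf m p) g (s-1)) := by
  unfold convPmf
  cases s with
  | zero => simp [binom_split]; ring
  | succ n =>
    simp only [Nat.succ_ne_zero, if_false, Nat.succ_sub_one]
    calc ∑ i ∈ Finset.range (n+1+1), binomPmf (m+1) p i * g (n+1-i)
        = ∑ i ∈ Finset.range (n+1+1),
            ((1-p) * (binomPmf m p i * g (n+1-i)) +
             p * ((if i = 0 then 0 else binomPmf m p (i-1)) * g (n+1-i))) := by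
          apply Finset.sum_congr rfl
          intro i _
          rw [binom_split]; ring
      _ = (1-p) * ∑ i ∈ Finset.range (n+1+1), binomPmf m p i * g (n+1-i) +
          p * ∑ i ∈ Finset.range (n+1+1),
            (if i = 0 then 0 else binomPmf m p (i-1)) * g (n+1-i) := by
          rw [Finset.sum_add_distrib, Finset.mul_sum, Finset.mul_sum]
      _ = (1-p) * ∑ i ∈ Finset.range (n+1+1), binomPmf m p i * g (n+1-i) +
          p * ∑ i ∈ Finset.range (n+1), binomPmf m p i * g (n-i) := by
          congr 1
          congr 1
          rw [Finset.sum_range_succ']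
          simp

lemma conv_comm (f g : ℕ → ℝ) (s : ℕ) : convPmf f g s = convPmf g f s := by
  unfold convPmf
  rw [← Finset.sum_range_reflect]
  apply Finset.sum_congr rfl
  intro i hi
  simp only [Finset.mem_range] at hi
  have h1 : s + 1 - 1 - i = s - i := by omega
  have h2 : s - (s - i) = i := by omega
  rw [h1, h2, mul_comm]

lemma binom_nonneg (m : ℕ) (p : ℝ) (hp0 : 0 ≤ p) (hp1 : p ≤ 1) (k : ℕ) :
    0 ≤ binomPmf m p k := by
  unfold binomPmf
  have : 0 ≤ 1 - p := by linarith
  positivity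

lemma binom_pos (m : ℕ) (p : ℝ) (hp0 : 0 < p) (hp1 : p < 1) (k : ℕ) (hk : k ≤ m) :
    0 < binomPmf m p k := by
  unfold binomPmf
  have h1 : 0 < (m.choose k : ℝ) := by exact_mod_cast Nat.choose_pos hk
  have : 0 < 1 - p := by linarith
  positivity

lemma conv_nonneg (f g : ℕ → ℝ) (hf : ∀ k, 0 ≤ f k) (hg : ∀ k, 0 ≤ g k) (s : ℕ) :
    0 ≤ convPmf f g s := by
  unfold convPmf
  exact Finset.sum_nonneg fun i _ => mul_nonneg (hf i) (hg _)

lemma conv_pos (a b : ℕ) (p q : ℝ) (hp0 : 0 < p) (hp1 : p < 1) (hq0 : 0 < q)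
    (hq1 : q < 1) (s : ℕ) (hs : s ≤ a + b) :
    0 < convPmf (binomPmf a p) (binomPmf b q) s := by
  unfold convPmf
  apply Finset.sum_pos'
  · intro i _
    exact mul_nonneg (binom_nonneg _ _ hp0.le hp1.le _) (binom_nonneg _ _ hq0.le hq1.le _)
  · refine ⟨min s a, ?_, ?_⟩
    · simp only [Finset.mem_range]; omega
    · exact mul_pos (binom_pos _ _ hp0 hp1 _ (by omega)) (binom_pos _ _ hq0 hq1 _ (by omega))

theorem stmt1 (x y : ℕ) (hx : 1 ≤ x) (hy : 1 ≤ y) (s : ℕ) (hs : s ≤ x + y) :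
    1/3 ≤ convPmf (binomPmf (x+1) (3/4)) (binomPmf (y-1) (1/4)) s /
          convPmf (binomPmf x (3/4)) (binomPmf y (1/4)) s ∧
    convPmf (binomPmf (x+1) (3/4)) (binomPmf (y-1) (1/4)) s /
          convPmf (binomPmf x (3/4)) (binomPmf y (1/4)) s ≤ 3 := by
  set a := convPmf (binomPmf x (3/4)) (binomPmf (y-1) (1/4)) s with ha
  set b := (if s = 0 then 0 else convPmf (binomPmf x (3/4)) (binomPmf (y-1) (1/4)) (s-1)) with hb
  have hDpos : 0 < convPmf (binomPmf x (3/4)) (binomPmf y (1/4)) s :=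
    conv_pos x y (3/4) (1/4) (by norm_num) (by norm_num) (by norm_num) (by norm_num) s hs
  have hN : convPmf (binomPmf (x+1) (3/4)) (binomPmf (y-1) (1/4)) s
      = (1 - 3/4) * a + (3/4) * b := by
    rw [conv_split]
  have hD : convPmf (binomPmf x (3/4)) (binomPmf y (1/4)) s
      = (1 - 1/4) * a + (1/4) * b := by
    have hy' : y = (y - 1) + 1 := by omega
    rw [conv_comm, hy', conv_split]
    rw [conv_comm (binomPmf (y-1) (1/4)) (binomPmf x (3/4))]
    congr 1
    by_cases h : s = 0
    · simp [h, hb]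
    · simp only [h, if_false, hb]
      rw [conv_comm]
  have hnn : ∀ k, 0 ≤ binomPmf x (3/4) k := binom_nonneg _ _ (by norm_num) (by norm_num)
  have hnn' : ∀ k, 0 ≤ binomPmf (y-1) (1/4) k := binom_nonneg _ _ (by norm_num) (by norm_num)
  have hann : 0 ≤ a := conv_nonneg _ _ hnn hnn' s
  have hbnn : 0 ≤ b := by
    by_cases h : s = 0
    · simp [h, hb]
    · simp only [h, if_false, hb]
      exact conv_nonneg _ _ hnn hnn' _
  rw [hN]
  rw [hD] at hDpos ⊢
  constructor
  · rw [le_div_iff₀ hDpos]; linarith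
  · rw [div_le_iff₀ hDpos]; linarith
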